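/- Let X be chosen uniformly from B_π. Then for all x ∈ [0,1] and each coordinate i, P[X[i] ≥ x·min(1, π(i+1)/π(i))] ≤ 1 - x. -/

import Mathlib

open MeasureTheory

/-- Coordinate `i ∈ {1,…,n-1}` of a super-diagonal vector `X ∈ ℝ^{n-1}`, with the
conventions `X[0] = X[n] = 0`. -/
def extCoord (m : ℕ) (X : Fin m → ℝ) (i : ℕ) : ℝ :=
  if h : 1 ≤ i ∧ i ≤ m then X ⟨i - 1, by omega⟩ else 0

/-- The super-diagonal parameterization `B_π ⊆ ℝ^{n-1}` of birth and death kernels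
with stationary distribution `π`. -/
def BDSet (n : ℕ) (π : ℕ → ℝ) : Set (Fin (n-1) → ℝ) :=
  {X | ∀ i : ℕ, 1 ≤ i → i ≤ n - 1 →
    0 ≤ extCoord (n-1) X i ∧
    extCoord (n-1) X i ≤ min (1 - π (i-1) / π i * extCoord (n-1) X (i-1))
                            (π (i+1) / π i * (1 - extCoord (n-1) X (i+1)))}

/-- The uniform (normalized Lebesgue) probability measure on `B_π`. -/
noncomputable def unifBD (n : ℕ) (π : ℕ → ℝ) : Measure (Fin (n-1) → ℝ) :=
  (volume (BDSet n π))⁻¹ • volume.restrict (BDSet n π)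

lemma extCoord_eq (m : ℕ) (X : Fin m → ℝ) (i : ℕ) (h1 : 1 ≤ i) (h2 : i ≤ m) :
    extCoord m X i = X ⟨i - 1, by omega⟩ := dif_pos ⟨h1, h2⟩

lemma extCoord_zero (m : ℕ) (X : Fin m → ℝ) (i : ℕ) (h : ¬ (1 ≤ i ∧ i ≤ m)) :
    extCoord m X i = 0 := dif_neg h

lemma extCoord_update_ne (m : ℕ) (X : Fin m → ℝ) (i' : Fin m) (t : ℝ) (j : ℕ)
    (hj : j ≠ i'.val + 1) :
    extCoord m (Function.update X i' t) j = extCoord m X j := by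
  unfold extCoord
  split
  · next h =>
    apply Function.update_of_ne
    intro hh
    apply hj
    have : j - 1 = i'.val := congrArg Fin.val hh
    omega
  · rfl

lemma extCoord_update_self (m : ℕ) (X : Fin m → ℝ) (i' : Fin m) (t : ℝ) :
    extCoord m (Function.update X i' t) (i'.val + 1) = t := by
  have h1 : 1 ≤ i'.val + 1 := by omega
  have h2 : i'.val + 1 ≤ m := i'.isLt
  rw [extCoord_eq m _ _ h1 h2]
  have : (⟨i'.val + 1 - 1, by omega⟩ : Fin m) = i' := by
    apply Fin.ext; simp
  rw [this, Function.update_self]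

/-- Nonnegativity of all extended coordinates of an element of `B_π`. -/
lemma extCoord_nonneg {n : ℕ} {π : ℕ → ℝ} {X : Fin (n-1) → ℝ} (hX : X ∈ BDSet n π)
    (j : ℕ) : 0 ≤ extCoord (n-1) X j := by
  by_cases h : 1 ≤ j ∧ j ≤ n - 1
  · exact (hX j h.1 h.2).1
  · rw [extCoord_zero _ _ _ h]

/-- Lowering one coordinate (keeping it nonnegative) stays in `B_π`. -/
lemma BDSet_update_mem {n : ℕ} (hn : 2 ≤ n) {π : ℕ → ℝ}
    (hπ : ∀ j, 1 ≤ j → j ≤ n → 0 < π j)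
    {X : Fin (n-1) → ℝ} (hX : X ∈ BDSet n π) {i : ℕ} (hi1 : 1 ≤ i) (hi2 : i ≤ n - 1)
    {t : ℝ} (ht0 : 0 ≤ t) (ht : t ≤ extCoord (n-1) X i) :
    Function.update X ⟨i - 1, by omega⟩ t ∈ BDSet n π := by
  set i' : Fin (n-1) := ⟨i - 1, by omega⟩ with hi'
  have hiv : i'.val + 1 = i := by simp [hi']; omega
  intro j hj1 hj2
  by_cases hji : j = i
  · subst hji
    rw [← hiv, extCoord_update_self, extCoord_update_ne _ _ _ _ _ (by omega),
      extCoord_update_ne _ _ _ _ _ (by omega), hiv]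
    refine ⟨ht0, le_trans ht (hX j hj1 hj2).2⟩
  · rw [extCoord_update_ne _ _ _ _ j (by omega)]
    refine ⟨(hX j hj1 hj2).1, ?_⟩
    have hmain := (hX j hj1 hj2).2
    by_cases h1 : j - 1 = i
    · -- j = i + 1 ; the first bound involves coordinate i
      have hji1 : j = i + 1 := by omega
      rw [extCoord_update_ne _ _ _ _ (j+1) (by omega)]
      have hupd : extCoord (n-1) (Function.update X i' t) (j-1) = t := by
        rw [show j - 1 = i'.val + 1 by omega]; exact extCoord_update_self _ _ _ _
      rw [hupd]
      have hX1 : extCoord (n-1) X (j-1) = extCoord (n-1) X i := by rw [h1]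
      have hr : 0 ≤ π (j-1) / π j :=
        le_of_lt (div_pos (hπ (j-1) (by omega) (by omega)) (hπ j (by omega) (by omega)))
      have hb1 : 1 - π (j-1) / π j * extCoord (n-1) X (j-1) ≤ 1 - π (j-1) / π j * t := by
        have := mul_le_mul_of_nonneg_left (ht.trans_eq hX1.symm) hr
        linarith
      calc extCoord (n-1) X j ≤ _ := hmain
        _ ≤ _ := min_le_min hb1 le_rfl
    · by_cases h2 : j + 1 = i
      · -- j = i - 1 ; the second bound involves coordinate i
        rw [extCoord_update_ne _ _ _ _ (j-1) (by omega)]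
        have hupd : extCoord (n-1) (Function.update X i' t) (j+1) = t := by
          rw [show j + 1 = i'.val + 1 by omega]; exact extCoord_update_self _ _ _ _
        rw [hupd]
        have hX2 : extCoord (n-1) X (j+1) = extCoord (n-1) X i := by rw [h2]
        have hr : 0 ≤ π (j+1) / π j :=
          le_of_lt (div_pos (hπ (j+1) (by omega) (by omega)) (hπ j (by omega) (by omega)))
        have hb2 : π (j+1) / π j * (1 - extCoord (n-1) X (j+1)) ≤ π (j+1) / π j * (1 - t) := by
          apply mul_le_mul_of_nonneg_left _ hr
          have := ht.trans_eq hX2.symm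
          linarith
        calc extCoord (n-1) X j ≤ _ := hmain
          _ ≤ _ := min_le_min le_rfl hb2
      · rw [extCoord_update_ne _ _ _ _ (j-1) (by omega),
          extCoord_update_ne _ _ _ _ (j+1) (by omega)]
        exact hmain

/-- Any coordinate of an element of `B_π` is bounded by `min 1 (π(i+1)/π(i))`. -/
lemma extCoord_le_min {n : ℕ} (hn : 2 ≤ n) {π : ℕ → ℝ}
    (hπ : ∀ j, 1 ≤ j → j ≤ n → 0 < π j)
    {X : Fin (n-1) → ℝ} (hX : X ∈ BDSet n π) {i : ℕ} (hi1 : 1 ≤ i) (hi2 : i ≤ n - 1) :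
    extCoord (n-1) X i ≤ min 1 (π (i+1) / π i) := by
  have hmain := (hX i hi1 hi2).2
  have h1 : π (i-1) / π i * extCoord (n-1) X (i-1) ≥ 0 := by
    by_cases hi : i = 1
    · rw [hi]
      simp [extCoord_zero (n-1) X 0 (by omega)]
    · exact mul_nonneg
        (le_of_lt (div_pos (hπ (i-1) (by omega) (by omega)) (hπ i (by omega) (by omega))))
        (extCoord_nonneg hX (i-1))
  have hb : 0 ≤ π (i+1) / π i :=
    le_of_lt (div_pos (hπ (i+1) (by omega) (by omega)) (hπ i (by omega) (by omega)))
  have h2 : π (i+1) / π i * (1 - extCoord (n-1) X (i+1)) ≤ π (i+1) / π i := by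
    have := extCoord_nonneg hX (i+1)
    nlinarith
  refine le_min ?_ ?_
  · calc extCoord (n-1) X i ≤ _ := hmain
      _ ≤ 1 - π (i-1) / π i * extCoord (n-1) X (i-1) := min_le_left _ _
      _ ≤ 1 := by linarith
  · calc extCoord (n-1) X i ≤ _ := hmain
      _ ≤ _ := min_le_right _ _
      _ ≤ _ := h2

/-- The key volume inequality. -/
lemma BD_vol_le {n : ℕ} (hn : 2 ≤ n) {π : ℕ → ℝ}
    (hπ : ∀ j, 1 ≤ j → j ≤ n → 0 < π j)
    {i : ℕ} (hi1 : 1 ≤ i) (hi2 : i ≤ n - 1) {x : ℝ} (hx0 : 0 ≤ x) (hx1 : x ≤ 1) :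
    volume ({X : Fin (n-1) → ℝ | x * min 1 (π (i+1) / π i) ≤ extCoord (n-1) X i} ∩ BDSet n π)
      ≤ ENNReal.ofReal (1 - x) * volume (BDSet n π) := by
  set m := n - 1 with hm
  set c : ℝ := min 1 (π (i+1) / π i) with hc
  set i' : Fin m := ⟨i - 1, by omega⟩ with hi'
  have hiv : i'.val + 1 = i := by simp [hi']; omega
  set L : (Fin m → ℝ) →ₗ[ℝ] (Fin m → ℝ) :=
    Matrix.toLin' (Matrix.diagonal (fun j : Fin m => if j = i' then (1-x) else 1)) with hL
  set v : Fin m → ℝ := fun j => if j = i' then x * c else 0 with hv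
  have hφ : ∀ Y : Fin m → ℝ,
      L Y + v = Function.update Y i' ((1-x) * Y i' + x * c) := by
    intro Y
    funext j
    have hLY : L Y j = (if j = i' then (1-x) else 1) * Y j := by
      rw [hL]
      simp [Matrix.toLin'_apply, Matrix.mulVec_diagonal]
    by_cases hj : j = i'
    · subst hj
      simp [hLY, hv, Function.update_self]
    · simp [Pi.add_apply, hLY, hv, hj, Function.update_of_ne hj]
  -- step 1: the event is contained in the image of `B` under the affine contraction
  have hsub : {X : Fin m → ℝ | x * c ≤ extCoord m X i} ∩ BDSet n π ⊆
      (fun Y => L Y + v) '' (BDSet n π) := by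
    rintro X ⟨hxc, hXB⟩
    have hxc' : x * c ≤ extCoord m X i := hxc
    have hXi : extCoord m X i = X i' := by
      rw [extCoord_eq m X i hi1 hi2]
    have hXc : extCoord m X i ≤ c := extCoord_le_min hn hπ hXB hi1 hi2
    rcases lt_or_eq_of_le hx1 with hlt | heq
    · -- x < 1
      have h1x : (0:ℝ) < 1 - x := by linarith
      set t : ℝ := (X i' - x * c) / (1 - x) with htdef
      have hXc' : X i' ≤ c := by rw [← hXi]; exact hXc
      have ht0 : 0 ≤ t := by
        apply div_nonneg _ (le_of_lt h1x)
        rw [← hXi]; linarith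
      have htle : t ≤ extCoord m X i := by
        rw [hXi, htdef, div_le_iff₀ h1x]
        nlinarith
      have hY : Function.update X i' t ∈ BDSet n π :=
        BDSet_update_mem hn hπ hXB hi1 hi2 ht0 htle
      refine ⟨Function.update X i' t, hY, ?_⟩
      show L (Function.update X i' t) + v = X
      rw [hφ]
      have hYi : Function.update X i' t i' = t := Function.update_self _ _ _
      rw [hYi]
      have : (1 - x) * t + x * c = X i' := by
        rw [htdef, mul_div_cancel₀ _ (ne_of_gt h1x)]
        ring
      rw [this, Function.update_idem, Function.update_eq_self]
    · -- x = 1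
      subst heq
      have hXeq : X i' = c := by
        have h1 : c ≤ X i' := by rw [← hXi]; linarith
        have h2 : X i' ≤ c := by rw [← hXi]; exact hXc
        linarith
      have hY : Function.update X i' 0 ∈ BDSet n π :=
        BDSet_update_mem hn hπ hXB hi1 hi2 le_rfl (extCoord_nonneg hXB i)
      refine ⟨Function.update X i' 0, hY, ?_⟩
      show L (Function.update X i' 0) + v = X
      rw [hφ]
      rw [Function.update_self, Function.update_idem]
      simp only [sub_self, zero_mul, one_mul, zero_add]
      rw [← hXeq, Function.update_eq_self]
  -- step 2: the volume of the image
  have himg : volume ((fun Y : Fin m → ℝ => L Y + v) '' (BDSet n π))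
      = ENNReal.ofReal (1 - x) * volume (BDSet n π) := by
    have hcomp : (fun Y : Fin m → ℝ => L Y + v) '' (BDSet n π)
        = (fun Z : Fin m → ℝ => Z + (-v)) ⁻¹' (⇑L '' (BDSet n π)) := by
      ext Z
      simp only [Set.mem_image, Set.mem_preimage]
      constructor
      · rintro ⟨Y, hY, rfl⟩
        refine ⟨Y, hY, ?_⟩
        abel
      · rintro ⟨Y, hY, hZY⟩
        refine ⟨Y, hY, ?_⟩
        have h' : L Y = Z + -v := hZY
        rw [h']
        abel
    rw [hcomp, measure_preimage_add_right, Measure.addHaar_image_linearMap,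
      hL, LinearMap.det_toLin', Matrix.det_diagonal]
    congr 2
    rw [Finset.prod_ite_eq' Finset.univ i' (fun _ => (1-x))]
    simp [abs_of_nonneg (by linarith : (0:ℝ) ≤ 1 - x)]
  exact le_trans (measure_mono hsub) (le_of_eq himg)

/-- For `X` uniform on `B_π`: `P[X[i] ≥ x·min(1, π(i+1)/π(i))] ≤ 1 - x` for `x ∈ [0,1]`. -/
theorem stmt_5 (n : ℕ) (hn : 2 ≤ n) (π : ℕ → ℝ) (hπ : ∀ j, 1 ≤ j → j ≤ n → 0 < π j)
    (i : ℕ) (hi1 : 1 ≤ i) (hi2 : i ≤ n - 1) :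
    ∀ x : ℝ, 0 ≤ x → x ≤ 1 →
      unifBD n π {X | x * min 1 (π (i+1) / π i) ≤ extCoord (n-1) X i}
        ≤ ENNReal.ofReal (1 - x) := by
  intro x hx0 hx1
  have hEmeas : MeasurableSet {X : Fin (n-1) → ℝ | x * min 1 (π (i+1) / π i) ≤ extCoord (n-1) X i} := by
    have : {X : Fin (n-1) → ℝ | x * min 1 (π (i+1) / π i) ≤ extCoord (n-1) X i}
        = (fun X : Fin (n-1) → ℝ => X ⟨i - 1, by omega⟩) ⁻¹' Set.Ici (x * min 1 (π (i+1) / π i)) := by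
      ext X
      simp [extCoord_eq (n-1) X i hi1 hi2]
    rw [this]
    exact (measurable_pi_apply _) measurableSet_Ici
  rw [unifBD, Measure.smul_apply, Measure.restrict_apply hEmeas, smul_eq_mul]
  calc (volume (BDSet n π))⁻¹ *
        volume ({X : Fin (n-1) → ℝ | x * min 1 (π (i+1) / π i) ≤ extCoord (n-1) X i} ∩ BDSet n π)
      ≤ (volume (BDSet n π))⁻¹ * (ENNReal.ofReal (1 - x) * volume (BDSet n π)) := by
        exact mul_le_mul_right (BD_vol_le hn hπ hi1 hi2 hx0 hx1) _
    _ = ENNReal.ofReal (1 - x) * ((volume (BDSet n π))⁻¹ * volume (BDSet n π)) := by ring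
    _ ≤ ENNReal.ofReal (1 - x) * 1 := by
        apply mul_le_mul_right
        rcases eq_or_ne (volume (BDSet n π)) 0 with h0 | h0
        · simp [h0]
        · rcases eq_or_ne (volume (BDSet n π)) ⊤ with ht | ht
          · simp [ht]
          · rw [ENNReal.inv_mul_cancel h0 ht]
    _ = ENNReal.ofReal (1 - x) := mul_one _
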